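/- For a > 0 and λ > 0, the function t ↦ t + λρ_a'(t) on (0,∞) attains infimum over [0,∞) at t = 0 (i.e., inf_{t>0} (t + λ a(a+1)/(a+t)²) ≥ λρ_a'(0+) = λ(1+a⁻¹)) if and only if a ≥ a₀ := λ + √(λ² + 2λ). -/

import Mathlib

/-- For `a, λ > 0`, the function `t ↦ t + λ ρ_a'(t)` on `(0,∞)` stays above its value
`λ ρ_a'(0+) = λ(1 + a⁻¹)` at zero (i.e. the minimum over `[0,∞)` is attained at `t = 0`)
if and only if `a ≥ a₀ = λ + √(λ² + 2λ)`. -/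
theorem stmt_4 (a lam : ℝ) (ha : 0 < a) (hlam : 0 < lam) :
    (∀ t : ℝ, 0 < t → lam * (1 + a⁻¹) ≤ t + lam * (a * (a + 1) / (a + t) ^ 2)) ↔
      lam + Real.sqrt (lam ^ 2 + 2 * lam) ≤ a := by
  have hsq : 0 ≤ lam ^ 2 + 2 * lam := by positivity
  constructor
  · intro H
    set g : ℝ → ℝ := fun t => a * (a + t) ^ 2 - lam * (a + 1) * (2 * a + t) with hg
    have hgpos : ∀ t ∈ Set.Ioi (0:ℝ), 0 ≤ g t := by
      intro t ht
      simp only [Set.mem_Ioi] at ht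
      have hat : (0:ℝ) < (a + t) ^ 2 := by positivity
      have H' := H t ht
      have hu : a * (a + 1) / (a + t) ^ 2 * (a + t) ^ 2 = a * (a + 1) :=
        div_mul_cancel₀ _ hat.ne'
      have h3 := mul_le_mul_of_nonneg_right H' (by positivity : (0:ℝ) ≤ a * (a + t) ^ 2)
      have hu2 : lam * a * (a * (a + 1) / (a + t) ^ 2 * (a + t) ^ 2) = lam * a * (a * (a + 1)) := by
        rw [hu]
      have hlhs : lam * (1 + a⁻¹) * (a * (a + t) ^ 2) = lam * (a + 1) * (a + t) ^ 2 := by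
        field_simp
      have tg : (0:ℝ) ≤ t * g t := by
        rw [hlhs] at h3
        simp only [hg]
        nlinarith [h3, hu2]
      have h4 : t * 0 ≤ t * g t := by simpa using tg
      exact le_of_mul_le_mul_left h4 ht
    have h0 : 0 ≤ g 0 := by
      have hc : ContinuousAt g 0 := by fun_prop
      have htd : Filter.Tendsto g (nhdsWithin 0 (Set.Ioi (0:ℝ))) (nhds (g 0)) :=
        hc.continuousWithinAt.tendsto
      refine ge_of_tendsto htd ?_
      filter_upwards [self_mem_nhdsWithin] with t ht using hgpos t ht
    have hkey : 2 * lam * (a + 1) ≤ a ^ 2 := by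
      have h0' : 0 ≤ a * (a + 0) ^ 2 - lam * (a + 1) * (2 * a + 0) := h0
      nlinarith [h0', ha, hlam]
    have halam : lam ≤ a := by nlinarith
    have hs : Real.sqrt (lam ^ 2 + 2 * lam) ≤ a - lam := by
      rw [show a - lam = Real.sqrt ((a - lam) ^ 2) from (Real.sqrt_sq (by linarith)).symm]
      exact Real.sqrt_le_sqrt (by nlinarith)
    linarith
  · intro hA t ht
    have hkey : 2 * lam * (a + 1) ≤ a ^ 2 := by
      have h1 : Real.sqrt (lam ^ 2 + 2 * lam) ≤ a - lam := by linarith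
      have h2 : lam ^ 2 + 2 * lam ≤ (a - lam) ^ 2 := by
        nlinarith [Real.sq_sqrt hsq, Real.sqrt_nonneg (lam ^ 2 + 2 * lam), h1]
      nlinarith
    have hat : (0:ℝ) < (a + t) ^ 2 := by positivity
    have hu : a * (a + 1) / (a + t) ^ 2 * (a + t) ^ 2 = a * (a + 1) :=
      div_mul_cancel₀ _ hat.ne'
    have hlhs : lam * (1 + a⁻¹) * (a * (a + t) ^ 2) = lam * (a + 1) * (a + t) ^ 2 := by
      field_simp
    rw [← mul_le_mul_iff_of_pos_right (show (0:ℝ) < a * (a + t) ^ 2 by positivity), hlhs]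
    have hu2 : lam * a * (a * (a + 1) / (a + t) ^ 2 * (a + t) ^ 2) = lam * a * (a * (a + 1)) := by
      rw [hu]
    nlinarith [hu2, mul_pos ht ht, mul_nonneg ht.le (sub_nonneg.mpr hkey),
      mul_nonneg ha.le (sub_nonneg.mpr hkey), sq_nonneg t, mul_pos ha ht]
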